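/- Let P ∈ ℝ³ with ‖P‖ ≤ 1, let ε > 0, and let θ̄, φ̄, θ, φ ∈ ℝ with |θ̄ − θ| ≤ ε and |φ̄ − φ| ≤ ε. If ⟨X(θ̄,φ̄), P⟩ > √2·ε, then ⟨X(θ,φ), P⟩ > 0. -/

import Mathlib

noncomputable section

open Real

/-- A matrix acting on Euclidean space. -/
def act {m n : ℕ} (A : Matrix (Fin m) (Fin n) ℝ) (v : EuclideanSpace ℝ (Fin n)) :
    EuclideanSpace ℝ (Fin m) :=
  Matrix.toEuclideanLin A v

/-- Operator norm of a real matrix with respect to the Euclidean norms. -/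
def opNorm {m n : ℕ} (A : Matrix (Fin m) (Fin n) ℝ) : ℝ :=
  ‖LinearMap.toContinuousLinearMap (Matrix.toEuclideanLin A)‖

/-- The 2×2 rotation matrix by angle `α`. -/
def R (α : ℝ) : Matrix (Fin 2) (Fin 2) ℝ :=
  !![cos α, -sin α; sin α, cos α]

/-- The orthogonal projection matrix in direction `X θ φ`. -/
def M (θ φ : ℝ) : Matrix (Fin 2) (Fin 3) ℝ :=
  !![-sin θ, cos θ, 0; -cos θ * cos φ, -sin θ * cos φ, sin φ]

/-- The unit vector parametrized by spherical coordinates. -/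
def X (θ φ : ℝ) : EuclideanSpace ℝ (Fin 3) :=
  (WithLp.equiv 2 (Fin 3 → ℝ)).symm ![cos θ * sin φ, sin θ * sin φ, cos φ]

/-- Rotation about the x-axis. -/
def Rx (α : ℝ) : Matrix (Fin 3) (Fin 3) ℝ :=
  !![1, 0, 0; 0, cos α, -sin α; 0, sin α, cos α]

/-- Rotation about the y-axis. -/
def Ry (α : ℝ) : Matrix (Fin 3) (Fin 3) ℝ :=
  !![cos α, 0, -sin α; 0, 1, 0; sin α, 0, cos α]

/-- Rotation about the z-axis. -/
def Rz (α : ℝ) : Matrix (Fin 3) (Fin 3) ℝ :=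
  !![cos α, -sin α, 0; sin α, cos α, 0; 0, 0, 1]

open scoped RealInnerProductSpace

lemma one_sub_cos_le (x : ℝ) : 1 - Real.cos x ≤ x ^ 2 / 2 := by
  have h1 : Real.cos x = 1 - 2 * Real.sin (x / 2) ^ 2 := by
    have h := Real.cos_two_mul (x / 2)
    rw [show 2 * (x / 2) = x by ring] at h
    nlinarith [Real.sin_sq_add_cos_sq (x / 2)]
  have h2 : Real.sin (x / 2) ^ 2 ≤ (x / 2) ^ 2 := Real.sin_sq_le_sq
  nlinarith

lemma X_dist_sq (θ' φ' θ φ : ℝ) :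
    ‖X θ' φ' - X θ φ‖ ^ 2 =
      2 * (1 - Real.cos (φ' - φ)) +
        2 * Real.sin φ * Real.sin φ' * (1 - Real.cos (θ' - θ)) := by
  have hn : ‖X θ' φ' - X θ φ‖ ^ 2 = ∑ i : Fin 3, (X θ' φ' - X θ φ) i ^ 2 := by
    rw [EuclideanSpace.norm_eq]
    rw [Real.sq_sqrt (by positivity)]
    congr 1; ext i; rw [Real.norm_eq_abs, sq_abs]
  rw [hn]
  have hsub : ∀ i, (X θ' φ' - X θ φ) i = X θ' φ' i - X θ φ i := fun i => rfl
  simp only [hsub, Fin.sum_univ_three, X]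
  simp [WithLp.equiv_symm_apply, PiLp.toLp_apply, Real.cos_sub, Real.sin_sub, Matrix.cons_val_zero,
    Matrix.cons_val_one, Matrix.head_cons, Matrix.cons_val_succ]
  nlinarith [Real.sin_sq_add_cos_sq θ, Real.sin_sq_add_cos_sq θ',
    Real.sin_sq_add_cos_sq φ, Real.sin_sq_add_cos_sq φ']

lemma X_dist_le (ε θ' φ' θ φ : ℝ) (hε : 0 < ε) (hθ : |θ' - θ| ≤ ε) (hφ : |φ' - φ| ≤ ε) :
    ‖X θ' φ' - X θ φ‖ ≤ Real.sqrt 2 * ε := by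
  have h1 := one_sub_cos_le (φ' - φ)
  have h2 := one_sub_cos_le (θ' - θ)
  have h2' : 0 ≤ 1 - Real.cos (θ' - θ) := by nlinarith [Real.cos_le_one (θ' - θ)]
  have hs : Real.sin φ * Real.sin φ' ≤ 1 := by
    nlinarith [Real.neg_one_le_sin φ, Real.sin_le_one φ, Real.neg_one_le_sin φ',
      Real.sin_le_one φ']
  have hθ2 : (θ' - θ) ^ 2 ≤ ε ^ 2 := by
    rw [← sq_abs]; exact pow_le_pow_left₀ (abs_nonneg _) hθ 2
  have hφ2 : (φ' - φ) ^ 2 ≤ ε ^ 2 := by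
    rw [← sq_abs]; exact pow_le_pow_left₀ (abs_nonneg _) hφ 2
  have hsq : ‖X θ' φ' - X θ φ‖ ^ 2 ≤ 2 * ε ^ 2 := by
    rw [X_dist_sq]
    nlinarith
  have hrhs : (Real.sqrt 2 * ε) ^ 2 = 2 * ε ^ 2 := by
    rw [mul_pow, Real.sq_sqrt (by norm_num)]
  have : 0 ≤ Real.sqrt 2 * ε := by positivity
  nlinarith [norm_nonneg (X θ' φ' - X θ φ)]

/-- Positivity of the inner product with the projection direction is stable under
perturbation of the angles. -/
theorem inner_X_pos (P : EuclideanSpace ℝ (Fin 3)) (hP : ‖P‖ ≤ 1)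
    (ε θ' φ' θ φ : ℝ) (hε : 0 < ε) (hθ : |θ' - θ| ≤ ε) (hφ : |φ' - φ| ≤ ε)
    (h : ⟪X θ' φ', P⟫ > Real.sqrt 2 * ε) :
    ⟪X θ φ, P⟫ > 0 := by
  have hd : ⟪X θ' φ' - X θ φ, P⟫ ≤ Real.sqrt 2 * ε := by
    calc ⟪X θ' φ' - X θ φ, P⟫ ≤ ‖X θ' φ' - X θ φ‖ * ‖P‖ := real_inner_le_norm _ _
    _ ≤ (Real.sqrt 2 * ε) * 1 := by
        apply mul_le_mul (X_dist_le ε θ' φ' θ φ hε hθ hφ) hP (norm_nonneg _) (by positivity)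
    _ = Real.sqrt 2 * ε := mul_one _
  have hsplit : ⟪X θ' φ', P⟫ = ⟪X θ' φ' - X θ φ, P⟫ + ⟪X θ φ, P⟫ := by
    rw [inner_sub_left]; ring
  linarith
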